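/- Assume Hypothesis 7.1 holds for the subset I ⊆ S. Then the coefficient of the monomial (Λ_1 ⋯ Λ_{μ_I})^{(p−1)m} · Π_{k=1}^m Λ_{μ_I+k}^{p−1} in the determinant of the m × m matrix Ā^I(Λ) = [Ā^I_{uv}(Λ)]_{u,v ∈ U^I_min} equals (−1)^{(μ_I+1)m}·((p−1)!)^{−(μ_I+1)m} in 𝔽_p, which is nonzero. -/

import Mathlib

open MvPolynomial

open Finset in
@[to_additive]
lemma split_prod {M : Type*} [CommMonoid M] {μ m N : ℕ} (h : μ + m ≤ N) (f : Fin N → M)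
    (hf : ∀ j : Fin N, μ + m ≤ (j : ℕ) → f j = 1) :
    ∏ j, f j = (∏ t : Fin μ, f ⟨(t : ℕ), by omega⟩) * ∏ k : Fin m, f ⟨μ + (k : ℕ), by omega⟩ := by
  classical
  set f' : ℕ → M := fun t => if h : t < N then f ⟨t, h⟩ else 1 with hf'
  have h1 : ∏ j : Fin N, f j = ∏ t ∈ range N, f' t := by
    rw [← Fin.prod_univ_eq_prod_range]
    exact Finset.prod_congr rfl fun j _ => by simp [hf']
  have h2 : ∏ t ∈ range N, f' t = ∏ t ∈ range (μ + m), f' t := by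
    symm
    apply Finset.prod_subset (range_subset_range.2 h)
    intro t ht hnt
    simp only [mem_range] at ht hnt
    show (if h : t < N then f ⟨t, h⟩ else 1) = 1
    rw [dif_pos ht]
    exact hf ⟨t, ht⟩ (by show μ + m ≤ t; omega)
  have h3 : ∏ t ∈ range (μ + m), f' t = (∏ t ∈ range μ, f' t) * ∏ k ∈ range m, f' (μ + k) :=
    Finset.prod_range_add f' μ m
  have h4 : ∏ t ∈ range μ, f' t = ∏ t : Fin μ, f ⟨(t : ℕ), by omega⟩ := by
    rw [← Fin.prod_univ_eq_prod_range]
    refine Finset.prod_congr rfl fun t _ => ?_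
    show (if h : (t : ℕ) < N then f ⟨(t : ℕ), h⟩ else 1) = _
    rw [dif_pos (by omega)]
  have h5 : ∏ k ∈ range m, f' (μ + k) = ∏ k : Fin m, f ⟨μ + (k : ℕ), by omega⟩ := by
    rw [← Fin.prod_univ_eq_prod_range (fun k => f' (μ + k))]
    refine Finset.prod_congr rfl fun k _ => ?_
    show (if h : μ + (k : ℕ) < N then f ⟨μ + (k : ℕ), h⟩ else 1) = _
    rw [dif_pos (by omega)]
  rw [h1, h2, h3, h4, h5]

lemma base_inj : ∀ {k : ℕ} {B : ℕ} (v w : Fin k → ℕ), (∀ i, v i < B) → (∀ i, w i < B) →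
    (∑ i, v i * B ^ (i : ℕ)) = (∑ i, w i * B ^ (i : ℕ)) → v = w := by
  intro k
  induction k with
  | zero => intro B v w _ _ _; funext i; exact i.elim0
  | succ k ih =>
    intro B v w hv hw hsum
    have hB : 0 < B := lt_of_le_of_lt (Nat.zero_le _) (hv 0)
    rw [Fin.sum_univ_succ, Fin.sum_univ_succ] at hsum
    simp only [Fin.val_zero, pow_zero, mul_one, Fin.val_succ, pow_succ] at hsum
    have hrw : ∀ (u : Fin (k + 1) → ℕ),
        ∑ i : Fin k, u i.succ * (B ^ (i : ℕ) * B) = B * ∑ i : Fin k, u i.succ * B ^ (i : ℕ) := by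
      intro u; rw [Finset.mul_sum]; exact Finset.sum_congr rfl fun i _ => by ring
    rw [hrw v, hrw w] at hsum
    have h0 : v 0 = w 0 := by
      have := congrArg (· % B) hsum
      simpa [Nat.add_mul_mod_self_left, Nat.mod_eq_of_lt (hv 0), Nat.mod_eq_of_lt (hw 0)]
        using this
    have htail : ∑ i : Fin k, v i.succ * B ^ (i : ℕ) = ∑ i : Fin k, w i.succ * B ^ (i : ℕ) :=
      Nat.eq_of_mul_eq_mul_left hB (by omega)
    have := ih (fun i => v i.succ) (fun i => w i.succ) (fun i => hv _) (fun i => hw _) htail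
    funext i
    refine Fin.cases h0 (fun i => ?_) i
    exact congrFun this i

lemma max_term_eq {m : ℕ} (p t c : ℕ) (ν y : Fin m → ℕ) (hp : 0 < p)
    (heq : c + ∑ k, ν k * y k = p * t) (hν : ∑ k, ν k = p - 1)
    (hc : c ≤ t) (hy : ∀ k, ν k ≠ 0 → y k ≤ t) :
    c = t ∧ ∀ k, ν k ≠ 0 → y k = t := by
  obtain ⟨q, rfl⟩ : ∃ q, p = q + 1 := ⟨p - 1, by omega⟩
  simp only [Nat.add_sub_cancel] at hν
  have hle : ∀ k ∈ Finset.univ, ν k * y k ≤ ν k * t := by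
    intro k _
    by_cases h : ν k = 0
    · simp [h]
    · exact Nat.mul_le_mul_left _ (hy k h)
  have hsum_le : ∑ k, ν k * y k ≤ q * t := by
    calc ∑ k, ν k * y k ≤ ∑ k, ν k * t := Finset.sum_le_sum hle
    _ = (∑ k, ν k) * t := by rw [Finset.sum_mul]
    _ = q * t := by rw [hν]
  have hqt : (q + 1) * t = q * t + t := by ring
  have hc' : c = t := by omega
  refine ⟨hc', fun k hk => ?_⟩
  by_contra hne
  have hlt : y k < t := lt_of_le_of_ne (hy k hk) hne
  have hstrict : ∑ k, ν k * y k < ∑ k, ν k * t :=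
    Finset.sum_lt_sum hle ⟨k, Finset.mem_univ k,
      mul_lt_mul_of_pos_left hlt (Nat.pos_of_ne_zero hk)⟩
  rw [← Finset.sum_mul, hν] at hstrict
  omega

open Finset in
lemma mv_coeff_prod {σ : Type*} {R : Type*} [CommSemiring R] [DecidableEq σ]
    {ι : Type*} [DecidableEq ι] (s : Finset ι) (f : ι → MvPolynomial σ R) (d : σ →₀ ℕ) :
    (∏ i ∈ s, f i).coeff d = ∑ l ∈ s.finsuppAntidiag d, ∏ i ∈ s, (f i).coeff (l i) := by
  have h := MvPowerSeries.coeff_prod (fun i => ((f i : MvPolynomial σ R) : MvPowerSeries σ R)) d s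
  have hc : ((∏ i ∈ s, f i : MvPolynomial σ R) : MvPowerSeries σ R)
      = ∏ i ∈ s, ((f i : MvPolynomial σ R) : MvPowerSeries σ R) := by
    simp only [← MvPolynomial.coeToMvPowerSeries.ringHom_apply, map_prod]
  rw [← hc] at h
  simpa [MvPolynomial.coeff_coe] using h


/-- `a_j⁺ = (a_{0j}, …, a_{nj}, 1) ∈ ℕ^{n+2}`. -/
def aplus {n N : ℕ} (a : Fin N → Fin (n + 1) → ℕ) (j : Fin N) : Fin (n + 2) → ℕ :=
  Fin.snoc (a j) 1

/-- under Hypothesis 7.1, the coefficient of the monomial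
`(Λ₁⋯Λ_{μ_I})^{(p−1)m} · ∏_{k=1}^m Λ_{μ_I+k}^{p−1}` in `det Ā^I(Λ)` equals
`(−1)^{(μ_I+1)m}((p−1)!)^{−(μ_I+1)m}` in `𝔽_p`, which is nonzero.  Here `U^I_min`
is enumerated by `umin : Fin m → ℕ^{n+2}` and Hypothesis 7.1 is encoded by `κ`, `hκ`. -/
theorem stmt_14 (p n N d : ℕ) (hp : p.Prime) (hn : 1 ≤ n) (hN : 1 ≤ N) (hd : 2 ≤ d)
    (a : Fin N → Fin (n + 1) → ℕ) (ha : ∀ j, ∑ i, a j i = d)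
    (I : Finset (Fin (n + 1)))
    (μ m : ℕ) (hμ : μ + 1 = (I.card + d - 1) / d)
    (umin : Fin m → Fin (n + 2) → ℕ)
    (huinj : Function.Injective umin)
    (hurange : ∀ u : Fin (n + 2) → ℕ,
      ((∑ i : Fin (n + 1), u i.castSucc = d * u (Fin.last (n + 1))) ∧
        (∀ i ∈ I, 0 < u i.castSucc) ∧ u (Fin.last (n + 1)) = μ + 1)
      ↔ ∃ r : Fin m, umin r = u)
    (hNm : μ + m ≤ N)
    (κ : Fin m → Fin m)
    (hκ : ∀ r : Fin m, ∀ i : Fin (n + 2),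
      umin r i = aplus a ⟨μ + (κ r : ℕ), by have := (κ r).isLt; omega⟩ i +
        ∑ t : Fin μ, aplus a ⟨(t : ℕ), by have := t.isLt; omega⟩ i)
    (M : Matrix (Fin m) (Fin m) (MvPolynomial (Fin N) (ZMod p)))
    (hM : ∀ r c : Fin m, ∀ m' : Fin N →₀ ℕ, (M r c).coeff m' =
      if (∀ j, m' j ≤ p - 1) ∧
          (∀ i : Fin (n + 2), ∑ j, (m' j : ℤ) * (aplus a j i : ℤ) = p * umin r i - umin c i)
      then (-1) ^ (μ + 1) * (∏ j, ((m' j).factorial : ZMod p))⁻¹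
      else 0)
    (E : Fin N →₀ ℕ)
    (hE : ∀ j : Fin N, E j =
      if (j : ℕ) < μ then (p - 1) * m else if (j : ℕ) < μ + m then p - 1 else 0) :
    M.det.coeff E = (-1) ^ ((μ + 1) * m) * (((p - 1).factorial : ZMod p))⁻¹ ^ ((μ + 1) * m) ∧
    M.det.coeff E ≠ 0 := by
  classical
  haveI : Fact p.Prime := ⟨hp⟩
  have hp2 : 2 ≤ p := hp.two_le
  have hJlt : ∀ k : Fin m, μ + (k : ℕ) < N := fun k => by have := k.isLt; omega
  have hTlt : ∀ t : Fin μ, (t : ℕ) < N := fun t => by have := t.isLt; omega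
  set J : Fin m → Fin N := fun k => ⟨μ + (k : ℕ), hJlt k⟩ with hJ
  set T : Fin μ → Fin N := fun t => ⟨(t : ℕ), hTlt t⟩ with hT
  set x : Fin m → Fin (n + 2) → ℕ := fun r => aplus a (J (κ r)) with hx
  have hκ' : ∀ r i, umin r i = x r i + ∑ t, aplus a (T t) i := hκ
  have huminx : ∀ r r', x r = x r' → r = r' := fun r r' h =>
    huinj (funext fun i => by rw [hκ' r i, hκ' r' i, h])
  have hκinj : Function.Injective κ := by
    intro r r' h
    exact huminx r r' (by rw [hx]; simp only [h])
  set κe : Equiv.Perm (Fin m) := Equiv.ofBijective κ (Finite.injective_iff_bijective.mp hκinj)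
    with hκe'
  have hκe : ∀ r, κe r = κ r := fun r => rfl
  have hκes : ∀ k, κ (κe.symm k) = k := fun k => κe.apply_symm_apply k
  have haub : ∀ j i, aplus a j i ≤ d := by
    intro j i
    refine Fin.lastCases ?_ ?_ i
    · show aplus a j (Fin.last (n + 1)) ≤ d
      rw [aplus, Fin.snoc_last]; omega
    · intro i
      show aplus a j (Fin.castSucc i) ≤ d
      rw [aplus, Fin.snoc_castSucc]
      calc a j i ≤ ∑ i', a j i' :=
            Finset.single_le_sum (fun _ _ => Nat.zero_le _) (Finset.mem_univ i)
        _ = d := ha j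
  have halast : ∀ j, aplus a j (Fin.last (n + 1)) = 1 := fun j => by rw [aplus, Fin.snoc_last]
  set B := d + 1 with hB
  set F : Fin m → ℕ := fun r => ∑ i, x r i * B ^ (i : ℕ) with hF
  have hFinj : Function.Injective F := by
    intro r r' h
    refine huminx r r' (base_inj _ _ (fun i => ?_) (fun i => ?_) h) <;>
      exact lt_of_le_of_lt (haub _ _) (by omega)
  set g₀ : Fin m → (Fin N →₀ ℕ) := fun r => Finsupp.equivFunOnFinite.symm
    (fun j => if (j : ℕ) < μ ∨ (j : ℕ) = μ + (κ r : ℕ) then p - 1 else 0) with hg₀'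
  have hg₀ : ∀ r j, g₀ r j = if (j : ℕ) < μ ∨ (j : ℕ) = μ + (κ r : ℕ) then p - 1 else 0 :=
    fun r j => rfl
  have hcast1 : ((p - 1 : ℕ) : ℤ) = (p : ℤ) - 1 := by have : 1 ≤ p := hp.pos; omega
  have hJκ : ∀ k, J (κ (κe.symm k)) = J k :=
    fun k => Fin.ext (show μ + (κ (κe.symm k) : ℕ) = μ + (k : ℕ) by rw [hκes k])
  have hXk : ∀ k i, aplus a (J k) i = x (κe.symm k) i := fun k i => by
    simp only [hx]; rw [hJκ k]
  have key : ∀ (σ : Equiv.Perm (Fin m)) (l : Fin m →₀ (Fin N →₀ ℕ)),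
      (∑ r, l r) = E →
      (∀ r, (∀ j, (l r) j ≤ p - 1) ∧
        (∀ i : Fin (n + 2), ∑ j, (((l r) j : ℤ)) * (aplus a j i : ℤ)
          = p * umin (σ r) i - umin r i)) →
      σ = 1 ∧ ∀ r, l r = g₀ r := by
    intro σ l hlsum hcond
    have hcol : ∀ j, ∑ r, (l r) j = E j := fun j => by
      rw [← hlsum]; exact (Finsupp.finset_sum_apply _ _ _).symm
    have hjlo : ∀ (r : Fin m) (j : Fin N), (j : ℕ) < μ → (l r) j = p - 1 := by
      intro r j hj
      by_contra hne
      have hlt : ∑ s, (l s) j < ∑ _s : Fin m, (p - 1) :=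
        Finset.sum_lt_sum (fun s _ => (hcond s).1 j)
          ⟨r, Finset.mem_univ r, lt_of_le_of_ne ((hcond r).1 j) hne⟩
      rw [hcol j, hE j, if_pos hj, Finset.sum_const, Finset.card_univ, Fintype.card_fin,
        smul_eq_mul, Nat.mul_comm] at hlt
      exact lt_irrefl _ hlt
    have hjhi : ∀ (r : Fin m) (j : Fin N), μ + m ≤ (j : ℕ) → (l r) j = 0 := by
      intro r j hj
      have h0 : ∑ s, (l s) j = 0 := by
        rw [hcol j, hE j, if_neg (by omega), if_neg (by omega)]
      exact (Finset.sum_eq_zero_iff.mp h0) r (Finset.mem_univ r)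
    set ν : Fin m → Fin m → ℕ := fun r k => (l r) (J k) with hν
    have hvec : ∀ r i, x r i + ∑ k, ν r k * x (κe.symm k) i = p * x (σ r) i := by
      intro r i
      have heq := (hcond r).2 i
      have hsplit : ∑ j, ((l r) j : ℤ) * (aplus a j i : ℤ)
          = (∑ t : Fin μ, ((p : ℤ) - 1) * (aplus a (T t) i : ℤ))
            + ∑ k, (ν r k : ℤ) * (x (κe.symm k) i : ℤ) := by
        rw [split_sum hNm (fun j => ((l r) j : ℤ) * (aplus a j i : ℤ))
          (fun j hj => by
            show ((l r) j : ℤ) * (aplus a j i : ℤ) = 0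
            rw [hjhi r j hj]; simp)]
        beta_reduce
        congr 1
        · refine Finset.sum_congr rfl fun t _ => ?_
          rw [hjlo r ⟨(t : ℕ), hTlt t⟩ t.isLt, hcast1]
        · refine Finset.sum_congr rfl fun k _ => ?_
          rw [← hXk k i]
      have humin : ∀ s, (umin s i : ℤ) = (x s i : ℤ) + ∑ t, (aplus a (T t) i : ℤ) := fun s => by
        rw [hκ' s i]; push_cast; ring
      rw [hsplit, humin (σ r), humin r] at heq
      have hZ : (x r i : ℤ) + ∑ k, (ν r k : ℤ) * (x (κe.symm k) i : ℤ)
          = p * (x (σ r) i : ℤ) := by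
        have hms : ∑ t : Fin μ, ((p : ℤ) - 1) * (aplus a (T t) i : ℤ)
            = ((p : ℤ) - 1) * ∑ t, (aplus a (T t) i : ℤ) := by rw [Finset.mul_sum]
        rw [hms] at heq
        linear_combination heq
      exact_mod_cast hZ
    have hνsum : ∀ r, ∑ k, ν r k = p - 1 := by
      intro r
      have h := hvec r (Fin.last (n + 1))
      have hx1 : ∀ s, x s (Fin.last (n + 1)) = 1 := fun s => halast _
      simp only [hx1, mul_one] at h
      omega
    have hνcol : ∀ k, ∑ r, ν r k = p - 1 := by
      intro k
      have h := hcol (J k)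
      rw [hE (J k)] at h
      rw [if_neg (show ¬((J k : Fin N) : ℕ) < μ by simp only [hJ, Fin.val_mk]; omega),
        if_pos (show ((J k : Fin N) : ℕ) < μ + m by
          simp only [hJ, Fin.val_mk]; have := k.isLt; omega)] at h
      exact h
    have main : ∀ (t : ℕ) (r : Fin m), (Finset.univ.filter fun s => F r < F s).card = t →
        σ r = r ∧ ∀ k, ν r k = if k = κ r then p - 1 else 0 := by
      intro t
      induction t using Nat.strong_induction_on with
      | _ t IH =>
        intro r hrt
        have IH' : ∀ s, F r < F s → σ s = s ∧ ∀ k, ν s k = if k = κ s then p - 1 else 0 := by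
          intro s hs
          refine IH _ ?_ s rfl
          rw [← hrt]
          apply Finset.card_lt_card
          constructor
          · intro u hu
            simp only [Finset.mem_filter] at hu ⊢
            exact ⟨hu.1, lt_trans hs hu.2⟩
          · intro hsub
            have hmem : s ∈ Finset.univ.filter fun u => F r < F u := by
              simp only [Finset.mem_filter]; exact ⟨Finset.mem_univ s, hs⟩
            have := hsub hmem
            simp only [Finset.mem_filter] at this
            exact lt_irrefl _ this.2
        have hσq : σ (σ.symm r) = r := σ.apply_symm_apply r
        have hqle : F (σ.symm r) ≤ F r := by
          by_contra h
          push_neg at h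
          have h1 := (IH' (σ.symm r) h).1
          have hqr : σ.symm r = r := by rw [← h1, hσq]
          rw [hqr] at h
          exact lt_irrefl _ h
        have hkle : ∀ k, ν (σ.symm r) k ≠ 0 → F (κe.symm k) ≤ F r := by
          intro k hk
          by_contra h
          push_neg at h
          obtain ⟨hσs, hνs⟩ := IH' (κe.symm k) h
          have hνsk : ν (κe.symm k) k = p - 1 := by
            have := hνs k
            rw [if_pos (hκes k).symm] at this
            exact this
          have hqs : σ.symm r ≠ κe.symm k := by
            intro hqs
            rw [hqs] at hσq
            rw [hσs] at hσq
            rw [← hσq] at h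
            exact lt_irrefl _ h
          have hsum2 : ν (κe.symm k) k + ν (σ.symm r) k ≤ ∑ r', ν r' k := by
            rw [← Finset.add_sum_erase _ _ (Finset.mem_univ (κe.symm k))]
            have hmem : σ.symm r ∈ Finset.univ.erase (κe.symm k) :=
              Finset.mem_erase.mpr ⟨hqs, Finset.mem_univ _⟩
            exact Nat.add_le_add_left
              (Finset.single_le_sum (f := fun r' => ν r' k) (fun _ _ => Nat.zero_le _) hmem) _
          rw [hνcol k, hνsk] at hsum2
          omega
        have hφq : F (σ.symm r) + ∑ k, ν (σ.symm r) k * F (κe.symm k) = p * F r := by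
          have h1 : ∀ i, x (σ.symm r) i + ∑ k, ν (σ.symm r) k * x (κe.symm k) i
              = p * x r i := by
            intro i
            have := hvec (σ.symm r) i
            rwa [hσq] at this
          calc F (σ.symm r) + ∑ k, ν (σ.symm r) k * F (κe.symm k)
              = (∑ i, x (σ.symm r) i * B ^ (i : ℕ))
                + ∑ i, (∑ k, ν (σ.symm r) k * x (κe.symm k) i) * B ^ (i : ℕ) := by
                congr 1
                calc ∑ k, ν (σ.symm r) k * F (κe.symm k)
                    = ∑ k, ∑ i, ν (σ.symm r) k * (x (κe.symm k) i * B ^ (i : ℕ)) := by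
                      refine Finset.sum_congr rfl fun k _ => ?_
                      simp only [hF]
                      rw [Finset.mul_sum]
                  _ = ∑ i, ∑ k, ν (σ.symm r) k * (x (κe.symm k) i * B ^ (i : ℕ)) :=
                      Finset.sum_comm
                  _ = ∑ i, (∑ k, ν (σ.symm r) k * x (κe.symm k) i) * B ^ (i : ℕ) := by
                      refine Finset.sum_congr rfl fun i _ => ?_
                      rw [Finset.sum_mul]
                      exact Finset.sum_congr rfl fun k _ => by ring
            _ = ∑ i, (x (σ.symm r) i + ∑ k, ν (σ.symm r) k * x (κe.symm k) i) * B ^ (i : ℕ) := by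
                rw [← Finset.sum_add_distrib]
                exact Finset.sum_congr rfl fun i _ => by ring
            _ = ∑ i, (p * x r i) * B ^ (i : ℕ) := by
                refine Finset.sum_congr rfl fun i _ => by rw [h1 i]
            _ = p * F r := by
                rw [hF, Finset.mul_sum]
                exact Finset.sum_congr rfl fun i _ => by ring
        obtain ⟨hFq, hFk⟩ := max_term_eq p (F r) (F (σ.symm r)) (ν (σ.symm r))
          (fun k => F (κe.symm k)) hp.pos hφq (hνsum (σ.symm r)) hqle hkle
        have hqr : σ.symm r = r := hFinj hFq
        rw [hqr] at hFk
        constructor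
        · conv_lhs => rw [← hqr]
          exact hσq
        · intro k
          rcases eq_or_ne k (κ r) with hkκ | hkκ
          · rw [if_pos hkκ]
            have hz : ∀ k' ∈ Finset.univ, k' ≠ κ r → ν r k' = 0 := by
              intro k' _ hne
              by_contra h0
              have hsr : κe.symm k' = r := hFinj (hFk k' h0)
              exact hne (by rw [← hκes k', hsr])
            have hs := Finset.sum_eq_single_of_mem (κ r) (Finset.mem_univ _) hz
            rw [hνsum r] at hs
            rw [hkκ, ← hs]
          · rw [if_neg hkκ]
            by_contra h0
            have hsr : κe.symm k = r := hFinj (hFk k h0)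
            exact hkκ (by rw [← hκes k, hsr])
    have hall : ∀ r, σ r = r ∧ ∀ k, ν r k = if k = κ r then p - 1 else 0 :=
      fun r => main _ r rfl
    refine ⟨Equiv.ext fun r => (hall r).1, fun r => Finsupp.ext fun j => ?_⟩
    rw [hg₀ r j]
    rcases lt_or_ge (j : ℕ) μ with hj | hj
    · rw [if_pos (Or.inl hj)]; exact hjlo r j hj
    rcases lt_or_ge (j : ℕ) (μ + m) with hj2 | hj2
    · have hk : (j : ℕ) - μ < m := by omega
      have hjJ : j = J ⟨(j : ℕ) - μ, hk⟩ := Fin.ext (by simp only [hJ, Fin.val_mk]; omega)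
      rw [hjJ]
      show ν r ⟨(j : ℕ) - μ, hk⟩ = _
      rw [(hall r).2 ⟨(j : ℕ) - μ, hk⟩]
      have hvalJ : ((J ⟨(j : ℕ) - μ, hk⟩ : Fin N) : ℕ) = μ + ((j : ℕ) - μ) := rfl
      by_cases hkk : (⟨(j : ℕ) - μ, hk⟩ : Fin m) = κ r
      · rw [if_pos hkk, if_pos (Or.inr ?_)]
        rw [hvalJ, ← hkk]
      · rw [if_neg hkk, if_neg ?_]
        rintro (h | h)
        · rw [hvalJ] at h; omega
        · rw [hvalJ] at h
          exact hkk (Fin.ext (show (j : ℕ) - μ = ((κ r) : ℕ) by omega))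
    · rw [if_neg ?_]
      · exact hjhi r j hj2
      · rintro (h | h)
        · omega
        · have := (κ r).isLt; omega
  set l₀ : Fin m →₀ (Fin N →₀ ℕ) := Finsupp.equivFunOnFinite.symm g₀ with hl₀'
  have hl₀ : ∀ r, l₀ r = g₀ r := fun r => rfl
  have hg₀le : ∀ r j, (g₀ r) j ≤ p - 1 := by
    intro r j; rw [hg₀ r j]; split_ifs <;> omega
  have hvalJ' : ∀ k : Fin m, ((J k : Fin N) : ℕ) = μ + (k : ℕ) := fun k => rfl
  have hl₀sum : (∑ r, l₀ r) = E := by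
    ext j
    rw [Finsupp.finset_sum_apply, hE j]
    rcases lt_or_ge (j : ℕ) μ with hj | hj
    · rw [if_pos hj]
      have hc : ∀ r ∈ Finset.univ, (l₀ r) j = p - 1 := fun r _ => by
        rw [hl₀ r, hg₀ r j, if_pos (Or.inl hj)]
      rw [Finset.sum_congr rfl hc, Finset.sum_const, Finset.card_univ, Fintype.card_fin,
        smul_eq_mul, Nat.mul_comm]
    · rcases lt_or_ge (j : ℕ) (μ + m) with hj2 | hj2
      · rw [if_neg (by omega), if_pos hj2]
        have hk : (j : ℕ) - μ < m := by omega
        have hr : ∀ r, ((j : ℕ) < μ ∨ (j : ℕ) = μ + ((κ r) : ℕ)) ↔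
            r = κe.symm ⟨(j : ℕ) - μ, hk⟩ := by
          intro r
          constructor
          · rintro (h | h)
            · omega
            · have hκr : κ r = ⟨(j : ℕ) - μ, hk⟩ :=
                Fin.ext (show ((κ r) : ℕ) = (j : ℕ) - μ by omega)
              rw [← hκr]
              exact (κe.symm_apply_apply r).symm
          · intro h
            refine Or.inr ?_
            rw [h, hκes]
            show (j : ℕ) = μ + ((j : ℕ) - μ)
            omega
        calc ∑ r, (l₀ r) j
            = ∑ r, if r = κe.symm ⟨(j : ℕ) - μ, hk⟩ then p - 1 else 0 := by
              refine Finset.sum_congr rfl fun r _ => ?_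
              rw [hl₀ r, hg₀ r j]
              by_cases hc : r = κe.symm ⟨(j : ℕ) - μ, hk⟩
              · rw [if_pos hc, if_pos ((hr r).mpr hc)]
              · rw [if_neg hc, if_neg (fun hcc => hc ((hr r).mp hcc))]
          _ = p - 1 := by
              rw [Finset.sum_ite_eq' Finset.univ _ (fun _ => p - 1),
                if_pos (Finset.mem_univ _)]
      · rw [if_neg (by omega), if_neg (by omega)]
        refine Finset.sum_eq_zero fun r _ => ?_
        rw [hl₀ r, hg₀ r j, if_neg ?_]
        rintro (h | h)
        · omega
        · have := (κ r).isLt; omega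
  have hl₀mem : l₀ ∈ Finset.finsuppAntidiag Finset.univ E := by
    rw [Finset.mem_finsuppAntidiag]
    exact ⟨hl₀sum, Finset.subset_univ _⟩
  have hg₀cond : ∀ r, (∀ j, (g₀ r) j ≤ p - 1) ∧
      (∀ i : Fin (n + 2), ∑ j, (((g₀ r) j : ℤ)) * (aplus a j i : ℤ)
        = p * umin r i - umin r i) := by
    intro r
    refine ⟨hg₀le r, fun i => ?_⟩
    rw [split_sum hNm (fun j => ((g₀ r) j : ℤ) * (aplus a j i : ℤ)) (fun j hj => by
      show ((g₀ r) j : ℤ) * (aplus a j i : ℤ) = 0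
      rw [hg₀ r j, if_neg ?_]
      · simp
      · rintro (h | h)
        · omega
        · have := (κ r).isLt; omega)]
    have hmid : ∀ k : Fin m, (((g₀ r) (J k) : ℕ) : ℤ) = if k = κ r then ((p : ℤ) - 1) else 0 := by
      intro k
      rw [hg₀ r (J k)]
      by_cases hc : k = κ r
      · rw [if_pos hc, if_pos (Or.inr (by rw [hvalJ' k, hc])), hcast1]
      · rw [if_neg hc, if_neg ?_]
        · simp
        · rintro (h | h)
          · rw [hvalJ' k] at h; omega
          · rw [hvalJ' k] at h
            exact hc (Fin.ext (by omega))
    calc (∑ t : Fin μ, ((g₀ r) (T t) : ℤ) * (aplus a (T t) i : ℤ))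
          + ∑ k : Fin m, ((g₀ r) (J k) : ℤ) * (aplus a (J k) i : ℤ)
        = (((p : ℤ) - 1) * ∑ t, (aplus a (T t) i : ℤ)) + ((p : ℤ) - 1) * (x r i : ℤ) := by
          congr 1
          · rw [Finset.mul_sum]
            refine Finset.sum_congr rfl fun t _ => ?_
            rw [hg₀ r (T t), if_pos (Or.inl t.isLt), hcast1]
          · calc ∑ k : Fin m, ((g₀ r) (J k) : ℤ) * (aplus a (J k) i : ℤ)
                = ∑ k : Fin m, if k = κ r then ((p : ℤ) - 1) * (aplus a (J k) i : ℤ) else 0 := by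
                  refine Finset.sum_congr rfl fun k _ => ?_
                  rw [hmid k, ite_mul, zero_mul]
              _ = ((p : ℤ) - 1) * (aplus a (J (κ r)) i : ℤ) := by
                  rw [Finset.sum_ite_eq' Finset.univ (κ r)
                    (fun k => ((p : ℤ) - 1) * (aplus a (J k) i : ℤ)), if_pos (Finset.mem_univ _)]
              _ = ((p : ℤ) - 1) * (x r i : ℤ) := rfl
      _ = p * umin r i - umin r i := by
          have humin : (umin r i : ℤ) = (x r i : ℤ) + ∑ t, (aplus a (T t) i : ℤ) := by
            rw [hκ' r i]; push_cast; ring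
          rw [humin]; ring
  have hcoeff_diag : ∀ r, (M r r).coeff (g₀ r)
      = (-1 : ZMod p) ^ (μ + 1) * (((p - 1).factorial : ZMod p) ^ (μ + 1))⁻¹ := by
    intro r
    rw [hM r r (g₀ r), if_pos (hg₀cond r)]
    congr 1
    congr 1
    rw [split_prod hNm (fun j => (((g₀ r) j).factorial : ZMod p)) (fun j hj => by
      show (((g₀ r) j).factorial : ZMod p) = 1
      rw [hg₀ r j, if_neg ?_]
      · simp
      · rintro (h | h)
        · omega
        · have := (κ r).isLt; omega)]
    calc (∏ t : Fin μ, (((g₀ r) (T t)).factorial : ZMod p))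
          * ∏ k : Fin m, (((g₀ r) (J k)).factorial : ZMod p)
        = (((p - 1).factorial : ZMod p)) ^ μ * ((p - 1).factorial : ZMod p) := by
          congr 1
          · calc ∏ t : Fin μ, (((g₀ r) (T t)).factorial : ZMod p)
                = ∏ _t : Fin μ, (((p - 1).factorial : ZMod p)) := by
                  refine Finset.prod_congr rfl fun t _ => ?_
                  rw [hg₀ r (T t), if_pos (Or.inl t.isLt)]
              _ = (((p - 1).factorial : ZMod p)) ^ μ := by
                  rw [Finset.prod_const, Finset.card_univ, Fintype.card_fin]
          · calc ∏ k : Fin m, (((g₀ r) (J k)).factorial : ZMod p)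
                = ∏ k : Fin m, if k = κ r then (((p - 1).factorial : ZMod p)) else 1 := by
                  refine Finset.prod_congr rfl fun k _ => ?_
                  by_cases hc : k = κ r
                  · rw [hg₀ r (J k), if_pos (Or.inr (by rw [hvalJ' k, hc])), if_pos hc]
                  · rw [hg₀ r (J k), if_neg ?_, if_neg hc]
                    · simp
                    · rintro (h | h)
                      · rw [hvalJ' k] at h; omega
                      · rw [hvalJ' k] at h
                        exact hc (Fin.ext (by omega))
              _ = ((p - 1).factorial : ZMod p) := by
                  rw [Finset.prod_ite_eq' Finset.univ (κ r) fun _ => ((p - 1).factorial : ZMod p),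
                    if_pos (Finset.mem_univ _)]
        _ = (((p - 1).factorial : ZMod p)) ^ (μ + 1) := by rw [pow_succ]
  have hval : M.det.coeff E
      = (-1) ^ ((μ + 1) * m) * (((p - 1).factorial : ZMod p))⁻¹ ^ ((μ + 1) * m) := by
    rw [Matrix.det_apply', MvPolynomial.coeff_sum]
    have hterm : ∀ σ : Equiv.Perm (Fin m),
        MvPolynomial.coeff E (((Equiv.Perm.sign σ : ℤ) : MvPolynomial (Fin N) (ZMod p))
          * ∏ i, M (σ i) i)
        = ((Equiv.Perm.sign σ : ℤ) : ZMod p)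
          * ∑ l ∈ Finset.finsuppAntidiag Finset.univ E, ∏ r, (M (σ r) r).coeff (l r) := by
      intro σ
      rw [← map_intCast (C : ZMod p →+* MvPolynomial (Fin N) (ZMod p)), coeff_C_mul,
        mv_coeff_prod]
    rw [Finset.sum_congr rfl fun σ _ => hterm σ]
    have hzero : ∀ σ ∈ Finset.univ, σ ≠ (1 : Equiv.Perm (Fin m)) →
        ((Equiv.Perm.sign σ : ℤ) : ZMod p)
          * ∑ l ∈ Finset.finsuppAntidiag Finset.univ E, ∏ r, (M (σ r) r).coeff (l r) = 0 := by
      intro σ _ hσ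
      have h0 : ∑ l ∈ Finset.finsuppAntidiag Finset.univ E,
          ∏ r, (M (σ r) r).coeff (l r) = 0 := by
        refine Finset.sum_eq_zero fun l hl => ?_
        by_contra hne
        have hfac : ∀ r, (M (σ r) r).coeff (l r) ≠ 0 := by
          intro r hz
          exact hne (Finset.prod_eq_zero (Finset.mem_univ r) hz)
        have hcond : ∀ r, (∀ j, (l r) j ≤ p - 1) ∧
            (∀ i : Fin (n + 2), ∑ j, (((l r) j : ℤ)) * (aplus a j i : ℤ)
              = p * umin (σ r) i - umin r i) := by
          intro r
          by_contra hc
          have h := hM (σ r) r (l r)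
          rw [if_neg hc] at h
          exact hfac r h
        exact hσ (key σ l (Finset.mem_finsuppAntidiag.mp hl).1 hcond).1
      rw [h0, mul_zero]
    rw [Finset.sum_eq_single_of_mem 1 (Finset.mem_univ _) hzero]
    have hinner : ∑ l ∈ Finset.finsuppAntidiag Finset.univ E,
        ∏ r, (M ((1 : Equiv.Perm (Fin m)) r) r).coeff (l r)
        = ∏ r, (M r r).coeff (g₀ r) := by
      rw [Finset.sum_eq_single_of_mem l₀ hl₀mem ?_]
      · exact Finset.prod_congr rfl fun r _ => rfl
      · intro l hl hne
        by_contra hne0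
        have hfac : ∀ r, (M ((1 : Equiv.Perm (Fin m)) r) r).coeff (l r) ≠ 0 := by
          intro r hz
          exact hne0 (Finset.prod_eq_zero (Finset.mem_univ r) hz)
        have hcond : ∀ r, (∀ j, (l r) j ≤ p - 1) ∧
            (∀ i : Fin (n + 2), ∑ j, (((l r) j : ℤ)) * (aplus a j i : ℤ)
              = p * umin ((1 : Equiv.Perm (Fin m)) r) i - umin r i) := by
          intro r
          by_contra hc
          have h := hM ((1 : Equiv.Perm (Fin m)) r) r (l r)
          rw [if_neg hc] at h
          exact hfac r h
        have := (key 1 l (Finset.mem_finsuppAntidiag.mp hl).1 hcond).2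
        exact hne (Finsupp.ext fun r => by rw [this r, ← hl₀ r])
    rw [hinner, Equiv.Perm.sign_one]
    have h1 : (((1 : ℤˣ) : ℤ) : ZMod p) = 1 := by norm_num
    rw [h1, one_mul]
    calc ∏ r : Fin m, (M r r).coeff (g₀ r)
        = ∏ _r : Fin m, ((-1 : ZMod p) ^ (μ + 1) * (((p - 1).factorial : ZMod p) ^ (μ + 1))⁻¹) :=
          Finset.prod_congr rfl fun r _ => hcoeff_diag r
      _ = ((-1 : ZMod p) ^ (μ + 1) * (((p - 1).factorial : ZMod p) ^ (μ + 1))⁻¹) ^ m := by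
          rw [Finset.prod_const, Finset.card_univ, Fintype.card_fin]
      _ = _ := by
          rw [mul_pow, ← pow_mul, ← inv_pow, ← pow_mul]
  refine ⟨hval, ?_⟩
  rw [hval]
  have hw : ((p - 1).factorial : ZMod p) = -1 := ZMod.wilsons_lemma p
  rw [hw]
  have hinv : ((-1 : ZMod p))⁻¹ = -1 := inv_eq_of_mul_eq_one_right (by ring)
  rw [hinv, ← mul_pow]
  norm_num
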